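/- Let F₁,…,F_r be homogeneous forms of degrees d₁,…,d_r in m variables over a finite field 𝔽_q. If m > δ := d₁+⋯+d_r, then the system has at least q^(m−δ) common affine zeros in 𝔽_q^m. -/

import Mathlib

set_option linter.unusedSectionVars false
open MvPolynomial
namespace WarningAux
variable {F : Type*} [Field F] [Fintype F]

/-- Substitute `c` for the first variable. -/
noncomputable def psi {n : ℕ} (c : F) (f : MvPolynomial (Fin (n + 1)) F) :
    MvPolynomial (Fin n) F :=
  Polynomial.eval (MvPolynomial.C c) (MvPolynomial.finSuccEquiv F n f)

/-- Number of points where `f` does not vanish. -/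
noncomputable def wt {m : ℕ} (f : MvPolynomial (Fin m) F) : ℕ :=
  Nat.card {x : Fin m → F // eval x f ≠ 0}

lemma eval_psi {n : ℕ} (c : F) (s : Fin n → F) (f : MvPolynomial (Fin (n + 1)) F) :
    eval s (psi c f) = eval (Fin.cons c s) f := by
  rw [psi, eval_eq_eval_mv_eval', Polynomial.eval_map, Polynomial.eval,
    Polynomial.eval₂_eq_sum, Polynomial.eval₂_eq_sum, Polynomial.sum_def,
    Polynomial.sum_def, map_sum]
  simp

lemma wt_succ {n : ℕ} (f : MvPolynomial (Fin (n + 1)) F) :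
    wt f = ∑ c : F, wt (psi c f) := by
  classical
  have e : {x : Fin (n+1) → F // eval x f ≠ 0} ≃
      Σ c : F, {s : Fin n → F // eval s (psi c f) ≠ 0} :=
    { toFun := fun x => ⟨x.1 0, ⟨Fin.tail x.1, by
        rw [eval_psi, Fin.cons_self_tail]; exact x.2⟩⟩
      invFun := fun p => ⟨Fin.cons p.1 p.2.1, by rw [← eval_psi]; exact p.2.2⟩
      left_inv := fun x => Subtype.ext (Fin.cons_self_tail x.1)
      right_inv := fun p => by
        rcases p with ⟨c, y, hy⟩
        simp only [Fin.cons_zero, Fin.tail_cons]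
        rfl }
  rw [wt, Nat.card_congr e, Nat.card_eq_fintype_card, Fintype.card_sigma]
  congr 1; funext c
  rw [wt, Nat.card_eq_fintype_card]

lemma psi_eq_sum {n : ℕ} (c : F) (f : MvPolynomial (Fin (n + 1)) F) :
    psi c f = ∑ i ∈ Finset.range ((finSuccEquiv F n f).natDegree + 1),
      (finSuccEquiv F n f).coeff i * MvPolynomial.C c ^ i := by
  rw [psi, Polynomial.eval_eq_sum_range]

lemma degreeOf_psi_le {n : ℕ} (c : F) (f : MvPolynomial (Fin (n + 1)) F) (j : Fin n) :
    degreeOf j (psi c f) ≤ degreeOf j.succ f := by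
  rw [psi_eq_sum]
  refine (degreeOf_sum_le _ _ _).trans (Finset.sup_le fun i _ => ?_)
  calc degreeOf j ((finSuccEquiv F n f).coeff i * MvPolynomial.C c ^ i)
      = degreeOf j (MvPolynomial.C c ^ i * (finSuccEquiv F n f).coeff i) := by rw [mul_comm]
    _ ≤ degreeOf j ((finSuccEquiv F n f).coeff i) := by
        rw [← map_pow]; exact degreeOf_C_mul_le _ _ _
    _ ≤ degreeOf j.succ f := degreeOf_coeff_finSuccEquiv f j i

lemma totalDegree_psi_le {n : ℕ} (c : F) (f : MvPolynomial (Fin (n + 1)) F) :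
    totalDegree (psi c f) ≤ totalDegree f := by
  rw [psi_eq_sum]
  refine (totalDegree_finset_sum _ _).trans (Finset.sup_le fun i _ => ?_)
  by_cases h : (finSuccEquiv F n f).coeff i = 0
  · simp [h]
  · calc totalDegree ((finSuccEquiv F n f).coeff i * MvPolynomial.C c ^ i)
        ≤ totalDegree ((finSuccEquiv F n f).coeff i) + totalDegree (MvPolynomial.C c ^ i) :=
          totalDegree_mul _ _
      _ ≤ totalDegree ((finSuccEquiv F n f).coeff i) + i := by
          rw [← map_pow, totalDegree_C]; omega
      _ ≤ totalDegree f := totalDegree_coeff_finSuccEquiv_add_le f i h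


variable {F : Type*} [Field F] [Fintype F]

open MvPolynomial

lemma totalDegree_C_mul_eq {m : ℕ} {a : F} (ha : a ≠ 0) (p : MvPolynomial (Fin m) F) :
    totalDegree (MvPolynomial.C a * p) = totalDegree p := by
  refine le_antisymm ?_ ?_
  · exact (totalDegree_mul _ _).trans (by simp [totalDegree_C])
  · conv_lhs => rw [show p = MvPolynomial.C a⁻¹ * (MvPolynomial.C a * p) by
      rw [← mul_assoc, ← map_mul, inv_mul_cancel₀ ha, map_one, one_mul]]
    exact (totalDegree_mul _ _).trans (by simp [totalDegree_C])

lemma totalDegree_lt_mul_X_sub_C {m : ℕ} {p : MvPolynomial (Fin m) F} (hp : p ≠ 0)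
    (i : Fin m) (a : F) :
    totalDegree p < totalDegree ((X i - MvPolynomial.C a) * p) := by
  classical
  obtain ⟨s, hs, hse⟩ := Finset.exists_mem_eq_sup p.support
    (MvPolynomial.support_nonempty.mpr hp) (fun s => s.sum fun _ e => e)
  have hsum : (s + Finsupp.single i 1).sum (fun _ e => e) = p.totalDegree + 1 := by
    rw [Finsupp.sum_add_index (by simp) (by simp)]
    simp [Finsupp.sum_single_index, totalDegree, ← hse]
  have h2 : coeff (s + Finsupp.single i 1) p = 0 := by
    apply coeff_eq_zero_of_totalDegree_lt
    rw [Finsupp.sum] at hsum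
    omega
  have hc : coeff (s + Finsupp.single i 1) ((X i - MvPolynomial.C a) * p) = coeff s p := by
    rw [show (X i - MvPolynomial.C a) * p = p * X i - MvPolynomial.C a * p by ring,
      coeff_sub, coeff_mul_X, coeff_C_mul, h2, mul_zero, sub_zero]
  have hne : coeff (s + Finsupp.single i 1) ((X i - MvPolynomial.C a) * p) ≠ 0 := by
    rw [hc]; exact mem_support_iff.mp hs
  have := le_totalDegree (mem_support_iff.mpr hne)
  omega


lemma finSuccEquiv_X_sub_C {n : ℕ} (c : F) :
    finSuccEquiv F n (X 0 - MvPolynomial.C c) =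
      Polynomial.X - Polynomial.C (MvPolynomial.C c) := by
  rw [map_sub, finSuccEquiv_X_zero]
  congr 1
  simp [finSuccEquiv_apply]

lemma psi_eq_zero_factor {n : ℕ} {c : F} {f : MvPolynomial (Fin (n + 1)) F}
    (h : psi c f = 0) : ∃ g, f = (X 0 - MvPolynomial.C c) * g := by
  have hdvd : Polynomial.X - Polynomial.C (MvPolynomial.C c) ∣ finSuccEquiv F n f :=
    Polynomial.dvd_iff_isRoot.2 h
  obtain ⟨g, hg⟩ := hdvd
  refine ⟨(finSuccEquiv F n).symm g, (finSuccEquiv F n).injective ?_⟩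
  rw [map_mul, AlgEquiv.apply_symm_apply, finSuccEquiv_X_sub_C, hg]

lemma psi_X_sub_C {n : ℕ} (c c' : F) :
    psi c (X 0 - MvPolynomial.C c' : MvPolynomial (Fin (n + 1)) F)
      = MvPolynomial.C (c - c') := by
  rw [psi, finSuccEquiv_X_sub_C]
  simp [map_sub]

lemma psi_mul {n : ℕ} (c : F) (f g : MvPolynomial (Fin (n + 1)) F) :
    psi c (f * g) = psi c f * psi c g := by
  simp [psi]

/-- Key counting lemma: if `psi c f = 0` for all `c ∈ S` then `S.card` is at most the
degree of `f` in the first variable, and substitution drops the total degree by `S.card`. -/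
lemma key_count {n : ℕ} : ∀ (S : Finset F) (f : MvPolynomial (Fin (n + 1)) F), f ≠ 0 →
    (∀ c ∈ S, psi c f = 0) →
    S.card ≤ degreeOf 0 f ∧
      ∀ c ∉ S, totalDegree (psi c f) + S.card ≤ totalDegree f := by
  classical
  intro S
  induction S using Finset.induction_on with
  | empty => exact fun f hf _ => ⟨Nat.zero_le _, fun c _ => by
      simpa using totalDegree_psi_le c f⟩
  | @insert c' S hc' ih =>
    intro f hf hS
    obtain ⟨g, hg⟩ := psi_eq_zero_factor (hS c' (Finset.mem_insert_self c' S))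
    have hgne : g ≠ 0 := by rintro rfl; rw [mul_zero] at hg; exact hf hg
    have hXC : (X 0 - MvPolynomial.C c' : MvPolynomial (Fin (n + 1)) F) ≠ 0 := by
      intro h0
      have := finSuccEquiv_X_sub_C (n := n) c'
      rw [h0, map_zero] at this
      exact Polynomial.X_sub_C_ne_zero _ this.symm
    have hpsig : ∀ c ∈ S, psi c g = 0 := by
      intro c hc
      have hcc' : c ≠ c' := fun h => hc' (h ▸ hc)
      have := hS c (Finset.mem_insert_of_mem hc)
      rw [hg, psi_mul, psi_X_sub_C] at this
      rcases mul_eq_zero.1 this with h | h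
      · exact absurd (MvPolynomial.C_eq_zero.mp h) (sub_ne_zero.2 hcc')
      · exact h
    obtain ⟨ih1, ih2⟩ := ih g hgne hpsig
    have hdeg0 : degreeOf 0 f = degreeOf 0 g + 1 := by
      have h1 : (finSuccEquiv F n f) =
          (Polynomial.X - Polynomial.C (MvPolynomial.C c')) * finSuccEquiv F n g := by
        rw [hg, map_mul, finSuccEquiv_X_sub_C]
      have h2 : (finSuccEquiv F n g) ≠ 0 := fun h0 => hgne (by
        simpa using congrArg (finSuccEquiv F n).symm h0)
      rw [← natDegree_finSuccEquiv, ← natDegree_finSuccEquiv, h1,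
        Polynomial.natDegree_mul (Polynomial.X_sub_C_ne_zero _) h2,
        Polynomial.natDegree_X_sub_C]
      omega
    have htd : totalDegree g + 1 ≤ totalDegree f := by
      have := totalDegree_lt_mul_X_sub_C (F := F) hgne 0 c'
      rw [← hg] at this
      omega
    constructor
    · rw [Finset.card_insert_of_notMem hc']
      omega
    · intro c hc
      rw [Finset.mem_insert, not_or] at hc
      have hpc : psi c f = MvPolynomial.C (c - c') * psi c g := by
        rw [hg, psi_mul, psi_X_sub_C]
      have h3 : totalDegree (psi c f) = totalDegree (psi c g) := by
        rw [hpc, totalDegree_C_mul_eq (sub_ne_zero.2 hc.1)]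
      have := ih2 c hc.2
      rw [Finset.card_insert_of_notMem hc']
      omega


lemma wt_ge_of_bound {n : ℕ} (f : MvPolynomial (Fin (n + 1)) F) (S : Finset F) (B : ℕ)
    (hb : ∀ c ∉ S, B ≤ wt (psi c f)) :
    (Fintype.card F - S.card) * B ≤ wt f := by
  classical
  rw [wt_succ]
  calc (Fintype.card F - S.card) * B = (Finset.univ \ S).card * B := by
        rw [Finset.card_sdiff_of_subset (Finset.subset_univ S), Finset.card_univ]
    _ ≤ ∑ c ∈ Finset.univ \ S, wt (psi c f) := by
        rw [← smul_eq_mul]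
        exact Finset.card_nsmul_le_sum _ _ _ (fun c hc => hb c (Finset.mem_sdiff.mp hc).2)
    _ ≤ ∑ c : F, wt (psi c f) :=
        Finset.sum_le_sum_of_subset Finset.sdiff_subset

lemma wt_pos : ∀ (m : ℕ) (f : MvPolynomial (Fin m) F), f ≠ 0 →
    (∀ j, degreeOf j f ≤ Fintype.card F - 1) → 1 ≤ wt f := by
  intro m
  induction m with
  | zero =>
    intro f hf _
    obtain ⟨a, rfl⟩ : ∃ a, f = MvPolynomial.C a := ⟨_, eq_C_of_isEmpty f⟩
    have ha : a ≠ 0 := fun h => hf (by rw [h, map_zero])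
    have : Nonempty {x : Fin 0 → F // eval x (MvPolynomial.C a) ≠ 0} :=
      ⟨⟨fun i => i.elim0, by rwa [eval_C]⟩⟩
    exact Nat.card_pos
  | succ n ih =>
    intro f hf hred
    classical
    set S := Finset.univ.filter (fun c : F => psi c f = 0) with hSdef
    obtain ⟨h1, _⟩ := key_count S f hf (fun c hc => (Finset.mem_filter.mp hc).2)
    have hcard : S.card < Fintype.card F := by
      have := hred 0
      have hq2 : 2 ≤ Fintype.card F := Fintype.one_lt_card
      omega
    obtain ⟨c, hc⟩ : ∃ c, c ∉ S := by
      by_contra h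
      push_neg at h
      have : S = Finset.univ := Finset.eq_univ_iff_forall.mpr h
      rw [this, Finset.card_univ] at hcard
      omega
    have hpsine : psi c f ≠ 0 := by
      intro h0
      exact hc (Finset.mem_filter.mpr ⟨Finset.mem_univ c, h0⟩)
    have h1le : 1 ≤ wt (psi c f) :=
      ih (psi c f) hpsine (fun j => (degreeOf_psi_le c f j).trans (hred j.succ))
    rw [wt_succ]
    calc 1 ≤ wt (psi c f) := h1le
      _ ≤ ∑ c : F, wt (psi c f) :=
        Finset.single_le_sum (f := fun d => wt (psi d f))
          (fun d _ => Nat.zero_le _) (Finset.mem_univ c)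

lemma main_induction : ∀ (m : ℕ) (f : MvPolynomial (Fin m) F), f ≠ 0 →
    (∀ j, degreeOf j f ≤ Fintype.card F - 1) →
    ∀ a b k, b + 1 < Fintype.card F →
    totalDegree f ≤ a * (Fintype.card F - 1) + b →
    m = a + 1 + k →
    (Fintype.card F - b) * Fintype.card F ^ k ≤ wt f := by
  intro m
  induction m with
  | zero => intro f _ _ a b k _ _ hm; omega
  | succ n ih =>
    intro f hf hred a b k hb hdeg hm
    classical
    have hq2 : 2 ≤ Fintype.card F := Fintype.one_lt_card
    set q := Fintype.card F with hq
    set S := Finset.univ.filter (fun c : F => psi c f = 0) with hSdef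
    obtain ⟨h1, h2⟩ := key_count S f hf (fun c hc => (Finset.mem_filter.mp hc).2)
    set t := S.card with htdef
    have ht1 : t ≤ q - 1 := h1.trans (hred 0)
    have hnotS : ∀ c ∉ S, psi c f ≠ 0 := fun c hc h0 =>
      hc (Finset.mem_filter.mpr ⟨Finset.mem_univ c, h0⟩)
    have hpsired : ∀ (c : F) (j : Fin n), degreeOf j (psi c f) ≤ q - 1 :=
      fun c j => (degreeOf_psi_le c f j).trans (hred j.succ)
    by_cases htb : t ≤ b
    · rcases Nat.eq_zero_or_pos k with hk | hk
      · subst hk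
        have hbnd := wt_ge_of_bound f S 1
          (fun c hc => wt_pos n (psi c f) (hnotS c hc) (hpsired c))
        have : q - b ≤ (q - t) * 1 := by omega
        calc (q - b) * q ^ 0 = q - b := by rw [pow_zero, mul_one]
          _ ≤ (q - t) * 1 := this
          _ ≤ wt f := hbnd
      · obtain ⟨k', rfl⟩ : ∃ k', k = k' + 1 := ⟨k - 1, by omega⟩
        have hB : ∀ c ∉ S, (q - (b - t)) * q ^ k' ≤ wt (psi c f) := by
          intro c hc
          refine ih (psi c f) (hnotS c hc) (hpsired c) a (b - t) k' (by omega) ?_ (by omega)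
          have := h2 c hc
          omega
        have hbnd := wt_ge_of_bound f S _ hB
        refine le_trans ?_ hbnd
        have hqt : q = t + (q - t) := by omega
        have hqb : q = b + (q - b) := by omega
        have hqbt : q - (b - t) = (q - b) + t := by omega
        have huv : q - b ≤ q - t := by omega
        calc (q - b) * q ^ (k' + 1) = ((q - b) * q) * q ^ k' := by ring
          _ ≤ ((q - t) * (q - (b - t))) * q ^ k' := by
              have : (q - b) * q ≤ (q - t) * (q - (b - t)) := by
                have e1 : (q - b) * t + (q - b) * (q - t) = (q - b) * q := by
                  rw [← Nat.mul_add, ← hqt]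
                have e2 : (q - t) * (q - (b - t)) = (q - t) * (q - b) + (q - t) * t := by
                  rw [hqbt, Nat.mul_add]
                have e3 : (q - b) * (q - t) = (q - t) * (q - b) := Nat.mul_comm _ _
                have h8 : (q - b) * t ≤ (q - t) * t := Nat.mul_le_mul_right t huv
                linarith
              exact Nat.mul_le_mul_right _ this
          _ = (q - t) * ((q - (b - t)) * q ^ k') := by ring
    · push_neg at htb
      have ha : 1 ≤ a := by
        by_contra h
        push_neg at h
        interval_cases a
        have h3 := h1.trans (degreeOf_le_totalDegree f 0)
        simp only [zero_mul, zero_add] at hdeg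
        omega
      obtain ⟨a', rfl⟩ : ∃ a', a = a' + 1 := ⟨a - 1, by omega⟩
      set b' := b + (q - 1) - t with hb'def
      have hAeq : (a' + 1) * (q - 1) = a' * (q - 1) + (q - 1) := by ring
      have hB : ∀ c ∉ S, (q - b') * q ^ k ≤ wt (psi c f) := by
        intro c hc
        refine ih (psi c f) (hnotS c hc) (hpsired c) a' b' k (by omega) ?_ (by omega)
        have := h2 c hc
        omega
      have hbnd := wt_ge_of_bound f S _ hB
      refine le_trans ?_ hbnd
      have hs1 : q - b' = (t - b) + 1 := by omega
      have hs2 : q - b = (q - t) + (t - b) := by omega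
      calc (q - b) * q ^ k ≤ ((q - t) * (q - b')) * q ^ k := by
            refine Nat.mul_le_mul_right _ ?_
            rw [hs1, hs2]
            have h4 : 1 ≤ q - t := by omega
            have h5 : (t - b) ≤ (q - t) * (t - b) := Nat.le_mul_of_pos_left _ h4
            have e : (q - t) * ((t - b) + 1) = (q - t) * (t - b) + (q - t) := by ring
            linarith
        _ = (q - t) * ((q - b') * q ^ k) := by ring


/-- Exponent reduction: replaces `e` by an equivalent exponent `≤ q - 1`. -/
def rexp (q e : ℕ) : ℕ := if e = 0 then 0 else (e - 1) % (q - 1) + 1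

lemma rexp_zero (q : ℕ) : rexp q 0 = 0 := by simp [rexp]

lemma rexp_le_self (q e : ℕ) : rexp q e ≤ e := by
  rcases Nat.eq_zero_or_pos e with rfl | he
  · simp [rexp]
  · have : (e - 1) % (q - 1) ≤ e - 1 := Nat.mod_le _ _
    simp only [rexp, if_neg (Nat.pos_iff_ne_zero.mp he)]
    omega

lemma rexp_le (q e : ℕ) (hq : 2 ≤ q) : rexp q e ≤ q - 1 := by
  rcases Nat.eq_zero_or_pos e with rfl | he
  · simp [rexp]
  · have : (e - 1) % (q - 1) < q - 1 := Nat.mod_lt _ (by omega)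
    simp only [rexp, if_neg (Nat.pos_iff_ne_zero.mp he)]
    omega

lemma pow_rexp (x : F) (e : ℕ) : x ^ rexp (Fintype.card F) e = x ^ e := by
  set q := Fintype.card F with hq
  rcases Nat.eq_zero_or_pos e with rfl | he
  · simp [rexp]
  · have hre : rexp q e ≠ 0 := by simp [rexp, Nat.pos_iff_ne_zero.mp he]
    rcases eq_or_ne x 0 with rfl | hx
    · rw [zero_pow hre, zero_pow (Nat.pos_iff_ne_zero.mp he)]
    · have hdecomp : e = rexp q e + (q - 1) * ((e - 1) / (q - 1)) := by
        have := Nat.mod_add_div (e - 1) (q - 1)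
        simp only [rexp, if_neg (Nat.pos_iff_ne_zero.mp he)]
        omega
      conv_rhs => rw [hdecomp]
      rw [pow_add, pow_mul, FiniteField.pow_card_sub_one_eq_one x hx, one_pow, mul_one]

/-- The reduction of a polynomial: same evaluations, each variable degree `≤ q - 1`. -/
noncomputable def reduce {m : ℕ} (f : MvPolynomial (Fin m) F) : MvPolynomial (Fin m) F :=
  ∑ s ∈ f.support,
    monomial (Finsupp.mapRange (rexp (Fintype.card F)) (rexp_zero _) s) (coeff s f)

lemma eval_reduce {m : ℕ} (x : Fin m → F) (f : MvPolynomial (Fin m) F) :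
    eval x (reduce f) = eval x f := by
  conv_rhs => rw [← support_sum_monomial_coeff f]
  rw [reduce, map_sum, map_sum]
  refine Finset.sum_congr rfl fun s _ => ?_
  rw [eval_monomial, eval_monomial]
  congr 1
  rw [Finsupp.prod_mapRange_index (by simp)]
  exact Finsupp.prod_congr fun j _ => pow_rexp (x j) (s j)

lemma degreeOf_reduce {m : ℕ} (f : MvPolynomial (Fin m) F) (j : Fin m) :
    degreeOf j (reduce f) ≤ Fintype.card F - 1 := by
  classical
  refine (degreeOf_sum_le _ _ _).trans (Finset.sup_le fun s _ => ?_)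
  rcases eq_or_ne (coeff s f) 0 with h | h
  · simp [h]
  · rw [degreeOf_monomial_eq _ _ h, Finsupp.mapRange_apply]
    exact rexp_le _ _ Fintype.one_lt_card

lemma totalDegree_reduce {m : ℕ} (f : MvPolynomial (Fin m) F) :
    totalDegree (reduce f) ≤ totalDegree f := by
  refine (totalDegree_finset_sum _ _).trans (Finset.sup_le fun s hs => ?_)
  refine (totalDegree_monomial_le _ _).trans ?_
  refine le_trans ?_ (le_totalDegree hs)
  rw [Finsupp.sum_mapRange_index (by simp)]
  exact Finsupp.sum_le_sum fun j _ => rexp_le_self _ _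

end WarningAux

open WarningAux in
/-- Warning's theorem: a system of forms of degrees `d i` in `m > ∑ d i` variables
over a finite field has at least `q ^ (m - ∑ d i)` common affine zeros. -/
theorem warning_system {F : Type*} [Field F] [Fintype F]
    (r m : ℕ) (d : Fin r → ℕ) (hd : ∀ i, 0 < d i)
    (P : Fin r → MvPolynomial (Fin m) F)
    (hP : ∀ i, (P i).IsHomogeneous (d i))
    (hm : m > ∑ i, d i) :
    Nat.card {x : Fin m → F // ∀ i, eval x (P i) = 0} ≥
      Fintype.card F ^ (m - ∑ i, d i) := by
  classical
  set q := Fintype.card F with hq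
  have hq2 : 2 ≤ q := Fintype.one_lt_card
  set δ := ∑ i, d i with hδ
  set f0 : MvPolynomial (Fin m) F := ∏ i, (1 - P i ^ (q - 1)) with hf0
  -- indicator property
  have hind : ∀ x : Fin m → F, (∀ i, eval x (P i) = 0) ↔ eval x f0 ≠ 0 := by
    intro x
    rw [hf0, map_prod]
    constructor
    · intro h
      have : ∀ i, eval x (1 - P i ^ (q - 1)) = 1 := by
        intro i
        rw [map_sub, map_one, map_pow, h i, zero_pow (by omega), sub_zero]
      rw [Finset.prod_congr rfl fun i _ => this i]
      simp
    · intro h i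
      by_contra hne
      apply h
      refine Finset.prod_eq_zero (Finset.mem_univ i) ?_
      rw [map_sub, map_one, map_pow, FiniteField.pow_card_sub_one_eq_one _ hne, sub_self]
  -- degree bound
  have hdeg0 : totalDegree f0 ≤ δ * (q - 1) := by
    rw [hf0]
    refine (totalDegree_finset_prod _ _).trans ?_
    have : ∀ i : Fin r, totalDegree (1 - P i ^ (q - 1)) ≤ (q - 1) * d i := by
      intro i
      refine (totalDegree_sub _ _).trans ?_
      rw [totalDegree_one]
      refine max_le (Nat.zero_le _) ?_
      exact (totalDegree_pow _ _).trans
        (Nat.mul_le_mul_left _ (hP i).totalDegree_le)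
    refine (Finset.sum_le_sum fun i _ => this i).trans ?_
    rw [← Finset.mul_sum, Nat.mul_comm]
  set f := reduce f0 with hf
  -- f is nonzero
  have heval1 : eval (0 : Fin m → F) f0 = 1 := by
    have h0 : ∀ i, eval (0 : Fin m → F) (P i) = 0 := by
      intro i
      rw [eval_zero]
      exact (hP i).coeff_eq_zero (by have := hd i; simp [map_zero]; omega)
    rw [hf0, map_prod]
    have : ∀ i : Fin r, eval (0 : Fin m → F) (1 - P i ^ (q - 1)) = 1 := by
      intro i
      rw [map_sub, map_one, map_pow, h0 i, zero_pow (by omega), sub_zero]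
    rw [Finset.prod_congr rfl fun i _ => this i]
    simp
  have hfne : f ≠ 0 := by
    intro h0
    have := eval_reduce (0 : Fin m → F) f0
    rw [← hf, h0, map_zero, heval1] at this
    exact zero_ne_one this
  -- apply the main induction
  have e1 : (0 : ℕ) + 1 < q := by omega
  have e2 : totalDegree f ≤ δ * (q - 1) + 0 := by
    rw [Nat.add_zero]; exact (totalDegree_reduce f0).trans hdeg0
  have e3 : m = δ + 1 + (m - δ - 1) := by omega
  have hmain := main_induction m f hfne (degreeOf_reduce f0) δ 0 (m - δ - 1) e1 e2 e3
  have hcard : Nat.card {x : Fin m → F // ∀ i, eval x (P i) = 0} = wt f := by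
    refine Nat.card_congr (Equiv.subtypeEquivRight fun x => ?_)
    rw [hf, eval_reduce]
    exact hind x
  rw [ge_iff_le, hcard, wt]
  rw [wt] at hmain
  calc q ^ (m - δ) = (q - 0) * q ^ (m - δ - 1) := by
        rw [Nat.sub_zero, ← pow_succ']
        congr 1
        omega
    _ ≤ _ := hmain
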